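/- (Zador's lower bound.) Let G ∈ ℝ^{n×n} be invertible, let L = G·ℤⁿ be the corresponding full-rank lattice, and let 𝒱 = {x ∈ ℝⁿ : ‖x‖ ≤ ‖x − λ‖ for all λ ∈ L} be its Voronoi region around 0. Then vol(𝒱) = |det G|, and the normalized second moment per dimension σ²(L) = (1/(n·vol(𝒱)))·∫_𝒱 ‖x‖² dx satisfies σ²(L) ≥ (Γ(n/2 + 1))^{2/n} · |det G|^{2/n} / ((n+2)·π). -/

import Mathlib

open MeasureTheory Real

section ZadorAux

open Submodule Pointwise Metric

private lemma zador_bisector_null {n : ℕ} (g g' : EuclideanSpace ℝ (Fin n)) (h : g ≠ g') :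
    volume {x : EuclideanSpace ℝ (Fin n) | ‖x - g‖ = ‖x - g'‖} = 0 := by
  set d := g' - g with hd
  have hd0 : d ≠ 0 := sub_ne_zero.2 (Ne.symm h)
  set c : ℝ := (‖g'‖^2 - ‖g‖^2)/(2:ℝ) with hc
  have hset : {x : EuclideanSpace ℝ (Fin n) | ‖x - g‖ = ‖x - g'‖} =
      {x | (inner ℝ x d : ℝ) = c} := by
    ext x
    simp only [Set.mem_setOf_eq]
    constructor
    · intro hx
      have h2 : ‖x - g‖^2 = ‖x - g'‖^2 := by rw [hx]
      rw [norm_sub_sq_real, norm_sub_sq_real] at h2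
      rw [hc, hd, inner_sub_right]
      linarith
    · intro hx
      have h2 : ‖x - g‖^2 = ‖x - g'‖^2 := by
        rw [norm_sub_sq_real, norm_sub_sq_real]
        rw [hd, inner_sub_right, hc] at hx
        linarith
      have := congrArg Real.sqrt h2
      simpa [Real.sqrt_sq, norm_nonneg] using this
  rw [hset]
  set f : EuclideanSpace ℝ (Fin n) →ₗ[ℝ] ℝ :=
    ((innerSL ℝ).flip d).toLinearMap with hf
  have hfx : ∀ x, f x = (inner ℝ x d : ℝ) := fun x => rfl
  set x₀ : EuclideanSpace ℝ (Fin n) := (c / ‖d‖^2) • d with hx₀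
  have hfx₀ : f x₀ = c := by
    rw [hfx, real_inner_smul_left, real_inner_self_eq_norm_sq]
    exact div_mul_cancel₀ c (pow_ne_zero _ (norm_ne_zero_iff.2 hd0))
  have hker : {x : EuclideanSpace ℝ (Fin n) | (inner ℝ x d : ℝ) = c} =
      (fun y => x₀ + y) '' (LinearMap.ker f : Set (EuclideanSpace ℝ (Fin n))) := by
    ext x
    simp only [Set.mem_setOf_eq, Set.mem_image, SetLike.mem_coe, LinearMap.mem_ker]
    constructor
    · intro hx
      exact ⟨x - x₀, by rw [map_sub, hfx, hfx₀, hx, sub_self], by abel⟩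
    · rintro ⟨y, hy, rfl⟩
      rw [← hfx, map_add, hy, add_zero, hfx₀]
  rw [hker, Set.image_add_left, measure_preimage_add]
  refine Measure.addHaar_submodule volume _ fun htop => ?_
  have : f d = 0 := LinearMap.mem_ker.1 (htop ▸ Submodule.mem_top)
  rw [hfx, real_inner_self_eq_norm_sq] at this
  exact (pow_ne_zero 2 (norm_ne_zero_iff.2 hd0)) this

private lemma zador_ball_moment {n : ℕ} (hn : 1 ≤ n) (r : ℝ) (hr : 0 < r) :
    ∫ x in ball (0 : EuclideanSpace ℝ (Fin n)) r, ‖x‖ ^ 2 =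
      (n : ℝ) * (volume (ball (0 : EuclideanSpace ℝ (Fin n)) 1)).toReal *
        (r ^ (n + 2) / (n + 2)) := by
  haveI : Nonempty (Fin n) := ⟨⟨0, hn⟩⟩
  haveI : Nontrivial (EuclideanSpace ℝ (Fin n)) := by infer_instance
  set f : ℝ → ℝ := (Set.Ioc 0 r).indicator (fun y => y ^ 2) with hf
  have key := MeasureTheory.integral_fun_norm_addHaar
    (volume : Measure (EuclideanSpace ℝ (Fin n))) f
  have hdim : Module.finrank ℝ (EuclideanSpace ℝ (Fin n)) = n := by
    simp [finrank_euclideanSpace]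
  rw [hdim] at key
  have hL : ∫ x : EuclideanSpace ℝ (Fin n), f ‖x‖ =
      ∫ x in ball (0 : EuclideanSpace ℝ (Fin n)) r, ‖x‖ ^ 2 := by
    have h1 : ∀ x : EuclideanSpace ℝ (Fin n), f ‖x‖ =
        (closedBall (0 : EuclideanSpace ℝ (Fin n)) r \ {0}).indicator
          (fun x => ‖x‖ ^ 2) x := by
      intro x
      rw [hf]
      by_cases hx : ‖x‖ ∈ Set.Ioc 0 r
      · rw [Set.indicator_of_mem hx, Set.indicator_of_mem]
        constructor
        · exact mem_closedBall_zero_iff.2 hx.2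
        · simp only [Set.mem_singleton_iff]
          intro h0
          rw [h0] at hx
          simpa using hx.1
      · rw [Set.indicator_of_notMem hx, Set.indicator_of_notMem]
        intro hc
        exact hx ⟨norm_pos_iff.2 (by simpa using hc.2), mem_closedBall_zero_iff.1 hc.1⟩
    simp_rw [h1]
    rw [integral_indicator ((measurableSet_closedBall).diff (measurableSet_singleton _))]
    refine setIntegral_congr_set (MeasureTheory.ae_eq_set.2 ⟨?_, ?_⟩)
    · refine measure_mono_null (fun x hx => ?_)
        (Measure.addHaar_sphere (volume : Measure (EuclideanSpace ℝ (Fin n))) 0 r)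
      have h1 : x ∈ closedBall (0 : EuclideanSpace ℝ (Fin n)) r := hx.1.1
      have h2 : x ∉ ball (0 : EuclideanSpace ℝ (Fin n)) r := hx.2
      simp only [mem_closedBall, mem_ball, not_lt] at h1 h2
      exact mem_sphere.2 (le_antisymm h1 h2)
    · refine measure_mono_null (fun x hx => ?_)
        (measure_singleton (0 : EuclideanSpace ℝ (Fin n)))
      have h1 := hx.1
      have h2 := hx.2
      simp only [Set.mem_diff, not_and, not_not] at h2
      exact h2 (ball_subset_closedBall h1)
  rw [hL] at key
  rw [key, nsmul_eq_mul, smul_eq_mul, ← mul_assoc]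
  congr 1
  have h3 : ∀ y : ℝ, y ^ (n - 1) • f y = (Set.Ioc 0 r).indicator (fun y => y ^ (n + 1)) y := by
    intro y
    rw [hf, smul_eq_mul]
    by_cases hy : y ∈ Set.Ioc 0 r
    · rw [Set.indicator_of_mem hy, Set.indicator_of_mem hy, ← pow_add]
      congr 1
      omega
    · rw [Set.indicator_of_notMem hy, Set.indicator_of_notMem hy, mul_zero]
  simp_rw [h3]
  rw [setIntegral_indicator measurableSet_Ioc,
    Set.inter_eq_self_of_subset_right Set.Ioc_subset_Ioi_self,
    ← intervalIntegral.integral_of_le hr.le, integral_pow]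
  push_cast
  ring

private lemma zador_rearrange {n : ℕ} (r : ℝ) (hr : 0 < r)
    (V : Set (EuclideanSpace ℝ (Fin n)))
    (hVmeas : MeasurableSet V)
    (hVint : IntegrableOn (fun x => ‖x‖ ^ 2) V)
    (hVfin : volume V ≠ ⊤)
    (hvol : volume V = volume (ball (0 : EuclideanSpace ℝ (Fin n)) r)) :
    ∫ x in ball (0 : EuclideanSpace ℝ (Fin n)) r, ‖x‖ ^ 2 ≤ ∫ x in V, ‖x‖ ^ 2 := by
  set B := ball (0 : EuclideanSpace ℝ (Fin n)) r with hB
  have hBmeas : MeasurableSet B := measurableSet_ball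
  have hBfin : volume B ≠ ⊤ := (measure_ball_lt_top).ne
  have hBint : IntegrableOn (fun x : EuclideanSpace ℝ (Fin n) => ‖x‖ ^ 2) B :=
    ((continuous_norm.pow 2).continuousOn.integrableOn_compact
      (isCompact_closedBall _ _)).mono_set ball_subset_closedBall
  have hsplitV : ∫ x in V, ‖x‖ ^ 2 = (∫ x in V ∩ B, ‖x‖ ^ 2) + ∫ x in V \ B, ‖x‖ ^ 2 :=
    (integral_inter_add_diff hBmeas hVint).symm
  have hsplitB : ∫ x in B, ‖x‖ ^ 2 = (∫ x in B ∩ V, ‖x‖ ^ 2) + ∫ x in B \ V, ‖x‖ ^ 2 :=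
    (integral_inter_add_diff hVmeas hBint).symm
  have hcomm : (B ∩ V : Set _) = V ∩ B := Set.inter_comm _ _
  have hVd : volume (V \ B) = volume (B \ V) := by
    have h1 : volume (V ∩ B) + volume (V \ B) = volume V :=
      measure_inter_add_diff V hBmeas
    have h2 : volume (B ∩ V) + volume (B \ V) = volume B :=
      measure_inter_add_diff B hVmeas
    rw [hcomm] at h2
    have hfin : volume (V ∩ B) ≠ ⊤ :=
      ((measure_mono Set.inter_subset_left).trans_lt hVfin.lt_top).ne
    rw [hvol, ← h2] at h1
    exact (ENNReal.add_right_inj hfin).1 h1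
  have hfinVd : volume (V \ B) ≠ ⊤ :=
    ((measure_mono Set.diff_subset).trans_lt hVfin.lt_top).ne
  have hub : ∫ x in B \ V, ‖x‖ ^ 2 ≤ r ^ 2 * (volume (B \ V)).toReal := by
    have := setIntegral_mono_on (hBint.mono_set Set.diff_subset)
      (integrableOn_const (C := r ^ 2) (((measure_mono Set.diff_subset).trans_lt
        measure_ball_lt_top)).ne) (hBmeas.diff hVmeas)
      (fun x hx => by
        have hxb : ‖x‖ < r := mem_ball_zero_iff.1 hx.1
        have : ‖x‖ ^ 2 ≤ r ^ 2 := by nlinarith [norm_nonneg x]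
        exact this)
    rw [setIntegral_const] at this
    calc ∫ x in B \ V, ‖x‖ ^ 2 ≤ (volume (B \ V)).toReal • r ^ 2 := this
    _ = r ^ 2 * (volume (B \ V)).toReal := by rw [smul_eq_mul, mul_comm]
  have hlb : r ^ 2 * (volume (V \ B)).toReal ≤ ∫ x in V \ B, ‖x‖ ^ 2 := by
    have := setIntegral_ge_of_const_le_real (c := r ^ 2) (hVmeas.diff hBmeas) hfinVd
      (fun x hx => by
        have hxb : r ≤ ‖x‖ := by
          by_contra hc
          exact hx.2 (mem_ball_zero_iff.2 (lt_of_not_ge hc))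
        nlinarith [norm_nonneg x])
      (hVint.mono_set Set.diff_subset)
    exact this
  rw [hsplitV, hsplitB, hcomm, hVd] at *
  linarith [hlb, hub]

private lemma zador_arith {n : ℕ} (hn : 1 ≤ n) (v : ℝ) (hv : 0 < v) (I : ℝ)
    (Vn : ℝ) (hVn : Vn = Real.sqrt π ^ n / Real.Gamma ((n:ℝ)/2 + 1))
    (r : ℝ) (hr : r = (v / Vn) ^ ((1:ℝ)/n))
    (ineq : (n : ℝ) * Vn * (r ^ (n + 2) / ((n:ℝ) + 2)) ≤ I) :
    Real.Gamma ((n : ℝ) / 2 + 1) ^ ((2 : ℝ) / n) * v ^ ((2 : ℝ) / n) /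
        (((n : ℝ) + 2) * π) ≤ (1 / ((n : ℝ) * v)) * I := by
  have hn0 : (n : ℝ) ≠ 0 := Nat.cast_ne_zero.2 (by omega)
  have hnpos : (0:ℝ) < n := by positivity
  have hΓ : 0 < Real.Gamma ((n:ℝ)/2 + 1) := Real.Gamma_pos_of_pos (by positivity)
  have hVnpos : 0 < Vn := by
    rw [hVn]; positivity
  have hrpos : 0 < r := by
    rw [hr]; positivity
  have hrn : r ^ n = v / Vn := by
    rw [hr, ← Real.rpow_natCast ((v / Vn) ^ ((1:ℝ)/n)) n, ← Real.rpow_mul (by positivity),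
      one_div, inv_mul_cancel₀ hn0, Real.rpow_one]
  have hr2 : r ^ 2 = Real.Gamma ((n:ℝ)/2 + 1) ^ ((2:ℝ)/n) * v ^ ((2:ℝ)/n) / π := by
    rw [hr, ← Real.rpow_natCast ((v / Vn) ^ ((1:ℝ)/n)) 2, ← Real.rpow_mul (by positivity)]
    have h1 : (1:ℝ)/n * ((2:ℕ):ℝ) = (2:ℝ)/n := by push_cast; ring
    rw [h1, Real.div_rpow hv.le hVnpos.le, hVn,
      Real.div_rpow (by positivity) hΓ.le]
    have h2 : (Real.sqrt π ^ n : ℝ) ^ ((2:ℝ)/n) = π := by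
      rw [← Real.rpow_natCast (Real.sqrt π) n, ← Real.rpow_mul (Real.sqrt_nonneg π),
        show (n:ℝ) * (2/n) = 2 by field_simp, Real.rpow_two, Real.sq_sqrt pi_pos.le]
    rw [h2]
    field_simp
  have key : (n : ℝ) * Vn * (r ^ (n + 2) / ((n:ℝ) + 2)) = (n * v) * (r^2 / ((n:ℝ)+2)) := by
    have : r ^ (n + 2) = r ^ n * r ^ 2 := pow_add r n 2
    rw [this, hrn]
    field_simp
  rw [key] at ineq
  have hnv : 0 < (n:ℝ) * v := by positivity
  have final : Real.Gamma ((n : ℝ) / 2 + 1) ^ ((2 : ℝ) / n) * v ^ ((2 : ℝ) / n) /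
      (((n : ℝ) + 2) * π) = r ^ 2 / ((n:ℝ) + 2) := by
    rw [hr2]
    field_simp
  rw [final]
  rw [one_div, inv_mul_eq_div, le_div_iff₀ hnv] at *
  calc r ^ 2 / ((n:ℝ) + 2) * ((n:ℝ) * v) = (n * v) * (r^2 / ((n:ℝ)+2)) := by ring
    _ ≤ I := ineq

end ZadorAux

/-- Zador's lower bound: for the full-rank lattice `L = G·ℤⁿ` with
Voronoi region `𝒱` around `0`, one has `vol(𝒱) = |det G|` and the normalized second
moment `σ²(L) = (1/(n·vol 𝒱))·∫_𝒱 ‖x‖²` satisfies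
`σ²(L) ≥ Γ(n/2+1)^{2/n}·|det G|^{2/n}/((n+2)π)`. -/
theorem zador_lower_bound {n : ℕ} (hn : 1 ≤ n)
    (G : Matrix (Fin n) (Fin n) ℝ) (hG : G.det ≠ 0)
    (Vor : Set (EuclideanSpace ℝ (Fin n)))
    (hVor : Vor = {x : EuclideanSpace ℝ (Fin n) | ∀ z : Fin n → ℤ,
      ‖x‖ ≤ ‖x - (WithLp.equiv 2 (Fin n → ℝ)).symm (G.mulVec fun i => (z i : ℝ))‖}) :
    volume Vor = ENNReal.ofReal |G.det| ∧
    Real.Gamma ((n : ℝ) / 2 + 1) ^ ((2 : ℝ) / n) * |G.det| ^ ((2 : ℝ) / n) /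
        (((n : ℝ) + 2) * π) ≤
      (1 / ((n : ℝ) * |G.det|)) * ∫ x in Vor, ‖x‖ ^ 2 := by
  classical
  open Submodule Pointwise Metric in
  haveI : Invertible G := G.invertibleOfIsUnitDet (isUnit_iff_ne_zero.2 hG)
  set φ : (Fin n → ℝ) ≃ₗ[ℝ] EuclideanSpace ℝ (Fin n) :=
    (G.toLinearEquiv' ‹_›).trans (WithLp.linearEquiv 2 ℝ (Fin n → ℝ)).symm with hφ
  have hφ_apply : ∀ v, φ v = (WithLp.equiv 2 (Fin n → ℝ)).symm (G.mulVec v) := fun v => rfl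
  set b : Module.Basis (Fin n) ℝ (EuclideanSpace ℝ (Fin n)) := (Pi.basisFun ℝ (Fin n)).map φ with hb
  have hVor' : Vor = {x : EuclideanSpace ℝ (Fin n) | ∀ z : Fin n → ℤ,
      ‖x‖ ≤ ‖x - φ (fun i => (z i : ℝ))‖} := hVor
  -- membership in the ℤ-span
  have hS : ∀ y, y ∈ Submodule.span ℤ (Set.range b) ↔
      ∃ z : Fin n → ℤ, y = φ (fun i => (z i : ℝ)) := by
    have key : ∀ z : Fin n → ℤ, φ (fun i => (z i : ℝ)) = ∑ i, z i • b i := by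
      intro z
      have : (fun i => (z i : ℝ)) = (∑ i, (z i : ℝ) • (Pi.basisFun ℝ (Fin n)) i : Fin n → ℝ) := by
        ext j
        rw [Finset.sum_apply]
        simp [Pi.basisFun_apply, Pi.single_apply]
      rw [this, map_sum]
      refine Finset.sum_congr rfl fun i _ => ?_
      rw [LinearEquiv.map_smul, hb]
      simp [← Int.cast_smul_eq_zsmul ℝ]
    intro y
    constructor
    · intro hy
      induction hy using Submodule.span_induction with
      | mem v hv =>
        obtain ⟨i, rfl⟩ := hv
        exact ⟨Pi.single i 1, by rw [key]; simp [Pi.single_apply, ← Int.cast_smul_eq_zsmul ℝ]⟩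
      | zero =>
        refine ⟨0, ?_⟩
        rw [show (fun i : Fin n => (((0 : Fin n → ℤ) i : ℤ) : ℝ)) = (0 : Fin n → ℝ)
          from funext fun i => by simp, map_zero]
      | add u v _ _ hu hv =>
        obtain ⟨z, rfl⟩ := hu; obtain ⟨w, rfl⟩ := hv
        exact ⟨z + w, by rw [← map_add]; congr 1; ext i; push_cast; simp⟩
      | smul c v _ hv =>
        obtain ⟨z, rfl⟩ := hv
        exact ⟨c • z, by
          rw [← Int.cast_smul_eq_zsmul ℝ, ← LinearEquiv.map_smul]; congr 1; ext i; push_cast; simp⟩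
    · rintro ⟨z, rfl⟩
      rw [key]
      exact Submodule.sum_mem _ fun i _ =>
        zsmul_mem (Submodule.subset_span (Set.mem_range_self i)) _
  set L := Submodule.span ℤ (Set.range b) with hL
  -- alternative characterization of the Voronoi region
  have hmem : ∀ x, x ∈ Vor ↔ ∀ y ∈ L, ‖x‖ ≤ ‖x - y‖ := by
    intro x
    rw [hVor']
    constructor
    · intro hx y hy
      obtain ⟨z, rfl⟩ := (hS y).1 hy
      exact hx z
    · intro hx z
      exact hx _ ((hS _).2 ⟨z, rfl⟩)
  have hclosed : IsClosed Vor := by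
    rw [hVor']
    have : {x : EuclideanSpace ℝ (Fin n) | ∀ z : Fin n → ℤ,
        ‖x‖ ≤ ‖x - φ (fun i => (z i : ℝ))‖} =
        ⋂ z : Fin n → ℤ, {x | ‖x‖ ≤ ‖x - φ (fun i => (z i : ℝ))‖} := by
      ext x; simp [Set.mem_iInter]
    rw [this]
    exact isClosed_iInter fun z => isClosed_le (continuous_norm)
      ((continuous_id.sub continuous_const).norm)
  have hLclosed : IsClosed (L : Set (EuclideanSpace ℝ (Fin n))) :=
    AddSubgroup.isClosed_of_discrete (H := L.toAddSubgroup)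
  -- Vor is a fundamental domain
  have hFD : IsAddFundamentalDomain L Vor volume := by
    refine ⟨hclosed.measurableSet.nullMeasurableSet, ?_, ?_⟩
    · refine Filter.Eventually.of_forall fun x => ?_
      obtain ⟨y, hyL, hy⟩ := hLclosed.exists_infDist_eq_dist ⟨0, Submodule.zero_mem L⟩ x
      refine ⟨⟨-y, Submodule.neg_mem _ hyL⟩, ?_⟩
      have : (⟨-y, Submodule.neg_mem _ hyL⟩ : L) +ᵥ x = x - y := by
        show -y + x = x - y; abel
      rw [this, hmem]
      intro w hw
      have h1 : Metric.infDist x (L : Set _) ≤ dist x (y + w) :=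
        Metric.infDist_le_dist_of_mem (Submodule.add_mem _ hyL hw)
      rw [hy] at h1
      have e1 : ‖x - y‖ = dist x y := by rw [dist_eq_norm]
      have e2 : ‖x - y - w‖ = dist x (y + w) := by rw [dist_eq_norm]; congr 1; abel
      rw [e1, e2]; exact h1
    · intro g g' hgg'
      have hsub : ((g +ᵥ Vor) : Set (EuclideanSpace ℝ (Fin n))) ∩ (g' +ᵥ Vor) ⊆
          {x | ‖x - g‖ = ‖x - g'‖} := by
        rintro x ⟨hx1, hx2⟩
        rw [Set.mem_vadd_set_iff_neg_vadd_mem] at hx1 hx2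
        have m1 : x - (g : EuclideanSpace ℝ (Fin n)) ∈ Vor := by
          have e : -g +ᵥ x = x - (g : EuclideanSpace ℝ (Fin n)) := by
            show -(g : EuclideanSpace ℝ (Fin n)) + x = _; abel
          rwa [e] at hx1
        have m2 : x - (g' : EuclideanSpace ℝ (Fin n)) ∈ Vor := by
          have e : -g' +ᵥ x = x - (g' : EuclideanSpace ℝ (Fin n)) := by
            show -(g' : EuclideanSpace ℝ (Fin n)) + x = _; abel
          rwa [e] at hx2
        have h1 : ‖x - g‖ ≤ ‖x - g'‖ := by
          have := (hmem _).1 m1 (g' - g) (Submodule.sub_mem _ g'.2 g.2)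
          calc ‖x - g‖ ≤ ‖x - g - ((g':EuclideanSpace ℝ (Fin n)) - g)‖ := this
          _ = ‖x - g'‖ := by congr 1; abel
        have h2 : ‖x - g'‖ ≤ ‖x - g‖ := by
          have := (hmem _).1 m2 ((g:EuclideanSpace ℝ (Fin n)) - g') (Submodule.sub_mem _ g.2 g'.2)
          calc ‖x - g'‖ ≤ ‖x - g' - ((g:EuclideanSpace ℝ (Fin n)) - g')‖ := this
          _ = ‖x - g‖ := by congr 1; abel
        exact le_antisymm h1 h2
      exact measure_mono_null hsub
        (zador_bisector_null _ _ (fun hc => hgg' (Subtype.coe_injective hc)))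
  -- Part 1: the volume of the Voronoi region
  have part1 : volume Vor = ENNReal.ofReal |G.det| := by
    haveI : VAddInvariantMeasure L (EuclideanSpace ℝ (Fin n)) volume :=
      (inferInstance : VAddInvariantMeasure L.toAddSubgroup (EuclideanSpace ℝ (Fin n)) volume)
    haveI : MeasurableVAdd L (EuclideanSpace ℝ (Fin n)) :=
      (inferInstance : MeasurableVAdd L.toAddSubgroup (EuclideanSpace ℝ (Fin n)))
    rw [hFD.measure_eq (ZSpan.isAddFundamentalDomain b volume)]
    set b₀ := (EuclideanSpace.basisFun (Fin n) ℝ).toBasis with hb₀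
    rw [ZSpan.measure_fundamentalDomain b volume b₀]
    have h1 : volume (ZSpan.fundamentalDomain b₀) = 1 := by
      rw [measure_congr (ZSpan.fundamentalDomain_ae_parallelepiped b₀ volume)]
      rw [hb₀]
      exact (EuclideanSpace.basisFun (Fin n) ℝ).volume_parallelepiped
    have h2 : b₀.det ⇑b = G.det := by
      rw [Module.Basis.det_apply]
      congr 1
      ext i j
      rw [Module.Basis.toMatrix_apply]
      have : b₀.repr (b j) i = (b j) i :=
        (EuclideanSpace.basisFun (Fin n) ℝ).coe_toBasis_repr_apply _ _
      rw [this, hb]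
      simp only [Module.Basis.map_apply, Pi.basisFun_apply]
      rw [hφ_apply]
      show G.mulVec (Pi.single j 1) i = G i j
      simp [Matrix.mulVec_single]
    rw [h1, h2, mul_one]
  refine ⟨part1, ?_⟩
  -- Part 2
  haveI : Nonempty (Fin n) := ⟨⟨0, hn⟩⟩
  set v : ℝ := |G.det| with hv
  have hvpos : 0 < v := abs_pos.2 hG
  set Vn : ℝ := Real.sqrt π ^ n / Real.Gamma ((n:ℝ)/2 + 1) with hVn
  have hΓ : 0 < Real.Gamma ((n:ℝ)/2 + 1) := Real.Gamma_pos_of_pos (by positivity)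
  have hVnpos : 0 < Vn := by rw [hVn]; positivity
  set r : ℝ := (v / Vn) ^ ((1:ℝ)/n) with hr
  have hn0 : (n : ℝ) ≠ 0 := Nat.cast_ne_zero.2 (by omega)
  have hrpos : 0 < r := by rw [hr]; positivity
  have hrn : r ^ n = v / Vn := by
    rw [hr, ← Real.rpow_natCast ((v / Vn) ^ ((1:ℝ)/n)) n, ← Real.rpow_mul (by positivity),
      one_div, inv_mul_cancel₀ hn0, Real.rpow_one]
  -- volume of balls
  have hball : ∀ ρ : ℝ, 0 ≤ ρ → volume (ball (0 : EuclideanSpace ℝ (Fin n)) ρ)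
      = ENNReal.ofReal (ρ ^ n * Vn) := by
    intro ρ hρ
    rw [EuclideanSpace.volume_ball, Fintype.card_fin, hVn,
      ← ENNReal.ofReal_pow hρ, ← ENNReal.ofReal_mul (by positivity)]
  have hvolball : volume (ball (0 : EuclideanSpace ℝ (Fin n)) r) = ENNReal.ofReal v := by
    rw [hball r hrpos.le, hrn, div_mul_cancel₀ _ hVnpos.ne']
  have hvolball1 : (volume (ball (0 : EuclideanSpace ℝ (Fin n)) 1)).toReal = Vn := by
    rw [hball 1 zero_le_one, one_pow, one_mul, ENNReal.toReal_ofReal hVnpos.le]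
  -- integrability on Vor
  have hVint : IntegrableOn (fun x : EuclideanSpace ℝ (Fin n) => ‖x‖ ^ 2) Vor := by
    obtain ⟨R, hR⟩ := (ZSpan.fundamentalDomain_isBounded b).subset_closedBall 0
    have hbound : Vor ⊆ closedBall 0 R := by
      intro x hx
      obtain ⟨g, hg⟩ := ZSpan.exist_unique_vadd_mem_fundamentalDomain b x
      have h1 : (g : EuclideanSpace ℝ (Fin n)) + x ∈ ZSpan.fundamentalDomain b := hg.1
      have h2 : ‖(g : EuclideanSpace ℝ (Fin n)) + x‖ ≤ R := by
        have := hR h1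
        simpa [mem_closedBall_zero_iff] using this
      have h3 : ‖x‖ ≤ ‖x - (-(g : EuclideanSpace ℝ (Fin n)))‖ :=
        (hmem x).1 hx _ (Submodule.neg_mem _ g.2)
      rw [mem_closedBall_zero_iff]
      calc ‖x‖ ≤ ‖x - (-(g : EuclideanSpace ℝ (Fin n)))‖ := h3
        _ = ‖(g : EuclideanSpace ℝ (Fin n)) + x‖ := by rw [sub_neg_eq_add, add_comm]
        _ ≤ R := h2
    exact ((continuous_norm.pow 2).continuousOn.integrableOn_compact
      (isCompact_closedBall _ _)).mono_set hbound
  have hVfin : volume Vor ≠ ⊤ := by rw [part1]; exact ENNReal.ofReal_ne_top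
  -- main comparison
  have hcomp : ∫ x in ball (0 : EuclideanSpace ℝ (Fin n)) r, ‖x‖ ^ 2 ≤ ∫ x in Vor, ‖x‖ ^ 2 :=
    zador_rearrange r hrpos Vor hclosed.measurableSet hVint hVfin
      (by rw [part1, hvolball])
  have hballmom := zador_ball_moment hn r hrpos
  rw [hvolball1] at hballmom
  exact zador_arith hn v hvpos _ Vn hVn r hr (by rw [← hballmom]; exact hcomp)
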